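/- The center of the Calkin algebra C(H) of an infinite-dimensional Hilbert space H consists exactly of the scalar multiples of the identity. -/

import Mathlib

open ContinuousLinearMap Filter Metric
open Submodule

set_option linter.unusedSectionVars false

namespace CalkinAux

variable {H : Type*} [NormedAddCommGroup H] [InnerProductSpace ℂ H] [CompleteSpace H]

local notation "⟪" x ", " y "⟫" => @inner ℂ _ _ x y

lemma exists_unit_orthogonal (hinf : ¬ FiniteDimensional ℂ H) (F : Submodule ℂ H)
    (hF : FiniteDimensional ℂ F) : ∃ x : H, ‖x‖ = 1 ∧ x ∈ Fᗮ := by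
  have hFne : F ≠ ⊤ := by
    rintro rfl
    exact hinf (Module.finite_def.mpr (by
      have := hF
      exact Module.finite_def.mp (Module.Finite.equiv (Submodule.topEquiv (R := ℂ) (M := H)))))
  have : Fᗮ ≠ ⊥ := by
    intro h
    exact hFne ((Submodule.orthogonal_eq_bot_iff (K := F)).mp h)
  obtain ⟨y, hy, hy0⟩ := Submodule.exists_mem_ne_zero_of_ne_bot this
  refine ⟨(‖y‖ : ℝ)⁻¹ • y, ?_, Submodule.smul_mem _ _ hy⟩
  rw [norm_smul, norm_inv, norm_norm, inv_mul_cancel₀ (norm_ne_zero_iff.mpr hy0)]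

lemma exists_orthonormal_seq (hinf : ¬ FiniteDimensional ℂ H) :
    ∃ e : ℕ → H, Orthonormal ℂ e := by
  have key : ∀ l : List H, ∃ x : H, ‖x‖ = 1 ∧ x ∈ (Submodule.span ℂ {y | y ∈ l})ᗮ := by
    intro l
    exact exists_unit_orthogonal hinf _ (FiniteDimensional.span_of_finite ℂ (l.finite_toSet))
  choose p hp1 hp2 using key
  let chain : ℕ → List H := fun n => Nat.rec [] (fun _ l => p l :: l) n
  have hchain : ∀ n, chain (n + 1) = p (chain n) :: chain n := fun n => rfl
  set e : ℕ → H := fun n => p (chain n) with he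
  have hmono : ∀ m n, m ≤ n → ∀ y, y ∈ chain m → y ∈ chain n := by
    intro m n hmn
    induction n with
    | zero => simp_all
    | succ n ih =>
      rcases Nat.lt_or_ge m (n+1) with h | h
      · intro y hy
        rw [hchain]
        exact List.mem_cons_of_mem _ (ih (Nat.lt_succ_iff.mp h) y hy)
      · have : m = n + 1 := le_antisymm hmn h
        subst this
        exact fun y hy => hy
  have horth : ∀ m n, m < n → ⟪e m, e n⟫ = 0 := by
    intro m n hmn
    have hmem : e m ∈ chain n := hmono (m+1) n hmn (e m) (by rw [hchain]; exact List.mem_cons_self)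
    have := hp2 (chain n)
    rw [Submodule.mem_orthogonal] at this
    exact this (e m) (Submodule.subset_span hmem)
  refine ⟨e, ?_⟩
  rw [orthonormal_iff_ite]
  intro i j
  rcases lt_trichotomy i j with h | h | h
  · rw [horth i j h, if_neg h.ne]
  · subst h
    simp [he, inner_self_eq_norm_sq_to_K, hp1]
  · rw [← inner_conj_symm, horth j i h, map_zero, if_neg h.ne']

lemma weak_null {e : ℕ → H} (he : Orthonormal ℂ e) (y : H) :
    Tendsto (fun n => ⟪y, e n⟫) atTop (nhds 0) := by
  have hs : Summable fun n => ‖⟪e n, y⟫‖ ^ 2 := he.inner_products_summable y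
  have h1 : Tendsto (fun n => ‖⟪e n, y⟫‖ ^ 2) atTop (nhds 0) := hs.tendsto_atTop_zero
  have h2 : Tendsto (fun n => ‖⟪e n, y⟫‖) atTop (nhds 0) := by
    have h := (Real.continuous_sqrt.tendsto 0).comp h1
    have heq : ((fun x => Real.sqrt x) ∘ fun n => ‖⟪e n, y⟫‖ ^ 2) = fun n => ‖⟪e n, y⟫‖ :=
      funext fun n => Real.sqrt_sq (norm_nonneg _)
    rw [heq] at h
    simpa using h
  have h3 : Tendsto (fun n => ⟪e n, y⟫) atTop (nhds 0) :=
    tendsto_zero_iff_norm_tendsto_zero.mpr h2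
  have h4 : Tendsto (fun n => (starRingEnd ℂ) ⟪e n, y⟫) atTop (nhds 0) := by
    have := (Complex.continuous_conj.tendsto 0).comp h3
    simpa [Function.comp_def] using this
  simpa only [inner_conj_symm] using h4

lemma compact_apply_orthonormal {T : H →L[ℂ] H} (hT : IsCompactOperator ⇑T)
    {e : ℕ → H} (he : Orthonormal ℂ e) :
    Tendsto (fun n => ‖T (e n)‖) atTop (nhds 0) := by
  by_contra hcon
  -- extract a subsequence bounded below
  rw [Metric.tendsto_atTop] at hcon
  push_neg at hcon
  obtain ⟨ε, hε, hfreq⟩ := hcon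
  have hfreq' : ∀ N, ∃ n ≥ N, ε ≤ ‖T (e n)‖ := by
    intro N
    obtain ⟨n, hn, h⟩ := hfreq N
    refine ⟨n, hn, ?_⟩
    rw [Real.dist_eq, abs_sub_comm, abs_of_nonpos (by simp [norm_nonneg])] at h
    · linarith [h]
  obtain ⟨φ, hφmono, hφ⟩ := Filter.extraction_of_frequently_atTop
    (Filter.frequently_atTop.mpr (fun N => hfreq' N))
  -- compact image
  obtain ⟨K, hK, hKsub⟩ := hT.image_closedBall_subset_compact 1
  have hmem : ∀ k, T (e (φ k)) ∈ K := by
    intro k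
    exact hKsub ⟨e (φ k), by simp [Metric.mem_closedBall, he.1 (φ k)], rfl⟩
  obtain ⟨w, hwK, ψ, hψmono, hψ⟩ := hK.tendsto_subseq hmem
  -- w has norm ≥ ε
  have hwnorm : ε ≤ ‖w‖ := by
    have : Tendsto (fun j => ‖T (e (φ (ψ j)))‖) atTop (nhds ‖w‖) := hψ.norm
    exact le_of_tendsto_of_tendsto' tendsto_const_nhds this (fun j => hφ (ψ j))
  -- but w = 0: inner products with w tend to 0
  have hinner : Tendsto (fun j => ⟪w, T (e (φ (ψ j)))⟫) atTop (nhds 0) := by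
    have h0 : Tendsto (fun n => ⟪ContinuousLinearMap.adjoint T w, e n⟫) atTop (nhds 0) :=
      weak_null he _
    have h0' := h0.comp ((hφmono.comp hψmono).tendsto_atTop)
    have : (fun j => ⟪w, T (e (φ (ψ j)))⟫)
        = fun j => ⟪ContinuousLinearMap.adjoint T w, e (φ (ψ j))⟫ := by
      funext j
      rw [ContinuousLinearMap.adjoint_inner_left]
    rw [this]
    exact h0'
  have hinner2 : Tendsto (fun j => ⟪w, T (e (φ (ψ j)))⟫) atTop (nhds ⟪w, w⟫) := by
    exact Tendsto.inner tendsto_const_nhds hψ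
  have : (⟪w, w⟫ : ℂ) = 0 := tendsto_nhds_unique hinner2 hinner
  rw [inner_self_eq_zero] at this
  subst this
  simp at hwnorm
  linarith

lemma finrank_compact (F : Submodule ℂ H) (hF : FiniteDimensional ℂ F) (T : H →L[ℂ] H) :
    IsCompactOperator ⇑(T ∘L (F.subtypeL ∘L orthogonalProjection F)) := by
  have hQ : IsCompactOperator ⇑(F.subtypeL ∘L orthogonalProjection F) := by
    haveI : ProperSpace F := FiniteDimensional.proper ℂ F
    refine ⟨Subtype.val '' closedBall (0 : F) 1, (isCompact_closedBall _ _).image continuous_subtype_val, ?_⟩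
    have : closedBall (0 : H) 1 ⊆ (⇑(F.subtypeL ∘L orthogonalProjection F)) ⁻¹' (Subtype.val '' closedBall (0 : F) 1) := by
      intro x hx
      refine ⟨orthogonalProjection F x, ?_, rfl⟩
      rw [mem_closedBall, dist_zero_right]
      calc ‖orthogonalProjection F x‖ ≤ 1 * ‖x‖ :=
        (orthogonalProjection F).le_of_opNorm_le (orthogonalProjection_norm_le F) x
      _ ≤ 1 := by simpa [mem_closedBall, dist_zero_right] using hx
    exact Filter.mem_of_superset (closedBall_mem_nhds 0 one_pos) this
  have := hQ.continuous_comp T.continuous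
  exact this

lemma exists_unit_of_not_compact {T : H →L[ℂ] H} (hT : ¬ IsCompactOperator ⇑T) :
    ∃ δ : ℝ, 0 < δ ∧ ∀ F : Submodule ℂ H, FiniteDimensional ℂ F →
      ∃ x : H, ‖x‖ = 1 ∧ x ∈ Fᗮ ∧ δ ≤ ‖T x‖ := by
  by_contra hcon
  push_neg at hcon
  apply hT
  -- for each k, get a finite-dimensional F with small norm off F
  have key : ∀ k : ℕ, ∃ S : H →L[ℂ] H, IsCompactOperator ⇑S ∧ ‖T - S‖ ≤ (1 : ℝ)/(k+1) := by
    intro k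
    obtain ⟨F, hF, hsmall⟩ := hcon ((1:ℝ)/(k+1)) (by positivity)
    haveI := hF
    refine ⟨T ∘L (F.subtypeL ∘L orthogonalProjection F), finrank_compact F hF T, ?_⟩
    refine ContinuousLinearMap.opNorm_le_bound _ (by positivity) (fun x => ?_)
    have hdecomp : (T - T ∘L (F.subtypeL ∘L orthogonalProjection F)) x
        = T (x - (orthogonalProjection F x : H)) := by
      simp [map_sub]
    rw [hdecomp]
    have hmem : x - (orthogonalProjection F x : H) ∈ Fᗮ := F.sub_starProjection_mem_orthogonal x
    have hnorm : ‖x - (orthogonalProjection F x : H)‖ ≤ ‖x‖ := by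
      rw [show x - (orthogonalProjection F x : H) = (orthogonalProjection Fᗮ x : H) from
        (starProjection_orthogonal_val (K := F) x).symm]
      calc ‖(orthogonalProjection Fᗮ x : H)‖ ≤ 1 * ‖x‖ :=
        (orthogonalProjection Fᗮ).le_of_opNorm_le (orthogonalProjection_norm_le Fᗮ) x
      _ = ‖x‖ := one_mul _
    -- T is small on unit vectors in Fᗮ, hence on all of Fᗮ
    have hsmall' : ∀ y ∈ Fᗮ, ‖T y‖ ≤ (1:ℝ)/(k+1) * ‖y‖ := by
      intro y hy
      rcases eq_or_ne y 0 with rfl | hy0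
      · simp
      · have hunit : ‖(‖y‖ : ℝ)⁻¹ • y‖ = 1 := by
          rw [norm_smul, norm_inv, norm_norm, inv_mul_cancel₀ (norm_ne_zero_iff.mpr hy0)]
        have := hsmall ((‖y‖ : ℝ)⁻¹ • y) hunit (Submodule.smul_mem _ _ hy)
        rw [ContinuousLinearMap.map_smul_of_tower, norm_smul, norm_inv, norm_norm] at this
        have hpos : 0 < ‖y‖ := norm_pos_iff.mpr hy0
        calc ‖T y‖ = ‖y‖ * (‖y‖⁻¹ * ‖T y‖) := by field_simp
        _ ≤ ‖y‖ * ((1:ℝ)/(k+1)) := by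
          exact mul_le_mul_of_nonneg_left this.le (norm_nonneg _)
        _ = (1:ℝ)/(k+1) * ‖y‖ := mul_comm _ _
    calc ‖T (x - (orthogonalProjection F x : H))‖
        ≤ (1:ℝ)/(k+1) * ‖x - (orthogonalProjection F x : H)‖ := hsmall' _ hmem
      _ ≤ (1:ℝ)/(k+1) * ‖x‖ := by
          exact mul_le_mul_of_nonneg_left hnorm (by positivity)
  choose S hScpt hSnorm using key
  have htend : Tendsto S atTop (nhds T) := by
    rw [tendsto_iff_norm_sub_tendsto_zero]
    have h0 : Tendsto (fun k : ℕ => (1:ℝ)/(k+1)) atTop (nhds 0) := tendsto_one_div_add_atTop_nhds_zero_nat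
    refine squeeze_zero (fun k => norm_nonneg _) (fun k => ?_) h0
    rw [← norm_neg]
    simpa using hSnorm k
  exact isCompactOperator_of_tendsto htend (Filter.Eventually.of_forall hScpt)

lemma exists_shift {e f : ℕ → H} (he : Orthonormal ℂ e) (hf : Orthonormal ℂ f) :
    ∃ v : H →L[ℂ] H, (∀ n, v (e n) = f n) ∧ (∀ n x, ⟪f n, v x⟫ = ⟪e n, x⟫) := by
  have hsum : ∀ x : H, Summable (fun n => ⟪e n, x⟫ • f n) := by
    intro x
    have h2 : Summable (fun n => ‖(⟪e n, x⟫ : ℂ)‖ ^ 2) := he.inner_products_summable x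
    have := (hf.orthogonalFamily.summable_iff_norm_sq_summable (fun n => ⟪e n, x⟫)).mpr h2
    simpa [LinearIsometry.toSpanSingleton_apply] using this
  let vl : H →ₗ[ℂ] H :=
    { toFun := fun x => ∑' n, ⟪e n, x⟫ • f n
      map_add' := by
        intro x y
        show ∑' n, ⟪e n, x + y⟫ • f n = (∑' n, ⟪e n, x⟫ • f n) + ∑' n, ⟪e n, y⟫ • f n
        rw [← (hsum x).tsum_add (hsum y)]
        congr 1
        funext n
        rw [inner_add_right, add_smul]
      map_smul' := by
        intro c x
        show ∑' n, ⟪e n, c • x⟫ • f n = c • ∑' n, ⟪e n, x⟫ • f n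
        rw [← tsum_const_smul'' c]
        congr 1
        funext n
        rw [inner_smul_right, smul_smul] }
  have hvl : ∀ x : H, vl x = ∑' n, ⟪e n, x⟫ • f n := fun x => rfl
  have hbound : ∀ x : H, ‖vl x‖ ≤ 1 * ‖x‖ := by
    intro x
    rw [one_mul]
    have htend : Tendsto (fun s : Finset ℕ => ∑ n ∈ s, ⟪e n, x⟫ • f n) atTop (nhds (vl x)) :=
      (hsum x).hasSum
    refine le_of_tendsto htend.norm (Filter.Eventually.of_forall (fun s => ?_))
    have hsq : ‖∑ n ∈ s, ⟪e n, x⟫ • f n‖ ^ 2 = ∑ n ∈ s, ‖(⟪e n, x⟫ : ℂ)‖ ^ 2 := by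
      have := hf.orthogonalFamily.norm_sum (fun n => ⟪e n, x⟫) s
      simpa [LinearIsometry.toSpanSingleton_apply] using this
    have hle : ‖∑ n ∈ s, ⟪e n, x⟫ • f n‖ ^ 2 ≤ ‖x‖ ^ 2 := by
      rw [hsq]; exact he.sum_inner_products_le x
    exact (pow_le_pow_iff_left₀ (norm_nonneg _) (norm_nonneg _) two_ne_zero).mp hle
  let v : H →L[ℂ] H := vl.mkContinuous 1 hbound
  have hv : ∀ x : H, v x = ∑' n, ⟪e n, x⟫ • f n := fun x => rfl
  refine ⟨v, ?_, ?_⟩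
  · intro n
    rw [hv]
    have : (fun m => ⟪e m, e n⟫ • f m) = fun m => if m = n then f n else 0 := by
      funext m
      rcases eq_or_ne m n with rfl | hmn
      · simp [inner_self_eq_norm_sq_to_K, he.1 m]
      · simp [he.2 hmn, hmn]
    rw [this, tsum_ite_eq]
  · intro n x
    rw [hv]
    have hs := (hsum x).hasSum.mapL (innerSL ℂ (f n))
    have heq : (fun m => (innerSL ℂ (f n)) (⟪e m, x⟫ • f m)) = fun m => if m = n then ⟪e n, x⟫ else 0 := by
      funext m
      rcases eq_or_ne m n with rfl | hmn
      · simp [inner_smul_right, inner_self_eq_norm_sq_to_K, hf.1 m]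
      · simp [inner_smul_right, hf.2 (Ne.symm hmn), hmn]
    rw [heq] at hs
    have h2 := hs.tsum_eq
    rw [tsum_ite_eq] at h2
    exact h2.symm

lemma diag_diff (a : H →L[ℂ] H)
    (hyp : ∀ b : H →L[ℂ] H, IsCompactOperator ⇑(a ∘L b - b ∘L a))
    {e f : ℕ → H} (he : Orthonormal ℂ e) (hf : Orthonormal ℂ f) :
    Tendsto (fun n => ⟪f n, a (f n)⟫ - ⟪e n, a (e n)⟫) atTop (nhds 0) := by
  obtain ⟨v, hv1, hv2⟩ := exists_shift he hf
  have hc := hyp v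
  have hnorm : Tendsto (fun n => ‖(a ∘L v - v ∘L a) (e n)‖) atTop (nhds 0) :=
    compact_apply_orthonormal hc he
  have key : ∀ n, ⟪f n, (a ∘L v - v ∘L a) (e n)⟫ = ⟪f n, a (f n)⟫ - ⟪e n, a (e n)⟫ := by
    intro n
    rw [ContinuousLinearMap.sub_apply, inner_sub_right, ContinuousLinearMap.comp_apply,
      ContinuousLinearMap.comp_apply, hv1 n, hv2 n]
  rw [tendsto_zero_iff_norm_tendsto_zero]
  refine squeeze_zero (fun n => norm_nonneg _) (fun n => ?_) hnorm
  rw [← key n]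
  calc ‖⟪f n, (a ∘L v - v ∘L a) (e n)⟫‖ ≤ ‖f n‖ * ‖(a ∘L v - v ∘L a) (e n)‖ :=
    norm_inner_le_norm _ _
  _ = ‖(a ∘L v - v ∘L a) (e n)‖ := by rw [hf.1 n, one_mul]

lemma diag_conv (hinf : ¬ FiniteDimensional ℂ H) (a : H →L[ℂ] H)
    (hyp : ∀ b : H →L[ℂ] H, IsCompactOperator ⇑(a ∘L b - b ∘L a)) :
    ∃ z : ℂ, ∀ e : ℕ → H, Orthonormal ℂ e →
      Tendsto (fun n => ⟪e n, a (e n)⟫) atTop (nhds z) := by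
  obtain ⟨e₀, he₀⟩ := exists_orthonormal_seq hinf
  have hbd : ∀ n, (fun n => ⟪e₀ n, a (e₀ n)⟫) n ∈ closedBall (0 : ℂ) ‖a‖ := by
    intro n
    rw [mem_closedBall, dist_zero_right]
    calc ‖⟪e₀ n, a (e₀ n)⟫‖ ≤ ‖e₀ n‖ * ‖a (e₀ n)‖ := norm_inner_le_norm _ _
    _ = ‖a (e₀ n)‖ := by rw [he₀.1 n, one_mul]
    _ ≤ ‖a‖ * ‖e₀ n‖ := a.le_opNorm _
    _ = ‖a‖ := by rw [he₀.1 n, mul_one]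
  obtain ⟨z, _, φ, hφmono, hφ⟩ := tendsto_subseq_of_bounded isBounded_closedBall hbd
  refine ⟨z, fun g hg => ?_⟩
  have hsub : Orthonormal ℂ (e₀ ∘ φ) := he₀.comp φ hφmono.injective
  have hdiff := diag_diff a hyp hsub hg
  have : (fun n => ⟪g n, a (g n)⟫)
      = fun n => (⟪g n, a (g n)⟫ - ⟪(e₀ ∘ φ) n, a ((e₀ ∘ φ) n)⟫) + ⟪e₀ (φ n), a (e₀ (φ n))⟫ := by
    funext n; simp [Function.comp]
  rw [this]
  have : (0 : ℂ) + z = z := zero_add z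
  rw [← this]
  exact hdiff.add hφ

lemma offdiag (a : H →L[ℂ] H) {z : ℂ}
    (hz : ∀ e : ℕ → H, Orthonormal ℂ e → Tendsto (fun n => ⟪e n, a (e n)⟫) atTop (nhds z))
    {e u : ℕ → H} (he : Orthonormal ℂ e) (hu : Orthonormal ℂ u)
    (heu : ∀ i j, ⟪e i, u j⟫ = 0) :
    Tendsto (fun n => ⟪u n, a (e n)⟫) atTop (nhds 0) := by
  set c : ℂ := (((Real.sqrt 2)⁻¹ : ℝ) : ℂ) with hcdef
  have hc : (starRingEnd ℂ) c = c := Complex.conj_ofReal _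
  have hcc : c * c = 1/2 := by
    rw [hcdef, ← Complex.ofReal_mul, ← mul_inv, Real.mul_self_sqrt (by norm_num : (0:ℝ) ≤ 2)]
    norm_num
  have hue : ∀ i j, ⟪u i, e j⟫ = 0 := fun i j => by
    rw [← inner_conj_symm, heu j i, map_zero]
  have expand1 : ∀ x₁ y₁ x₂ y₂ : H, ⟪c • (x₁ + y₁), c • (x₂ + y₂)⟫
      = (1/2) * (⟪x₁, x₂⟫ + ⟪x₁, y₂⟫ + ⟪y₁, x₂⟫ + ⟪y₁, y₂⟫) := by
    intro x₁ y₁ x₂ y₂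
    rw [inner_smul_left, inner_smul_right, hc, ← mul_assoc, hcc,
      inner_add_left, inner_add_right, inner_add_right]
    ring
  have expand2 : ∀ x₁ y₁ x₂ y₂ : H, ⟪c • (x₁ + Complex.I • y₁), c • (x₂ + Complex.I • y₂)⟫
      = (1/2) * (⟪x₁, x₂⟫ + Complex.I * ⟪x₁, y₂⟫ - Complex.I * ⟪y₁, x₂⟫ + ⟪y₁, y₂⟫) := by
    intro x₁ y₁ x₂ y₂
    rw [inner_smul_left, inner_smul_right, hc, ← mul_assoc, hcc,
      inner_add_left, inner_add_right, inner_add_right, inner_smul_left, inner_smul_right,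
      inner_smul_left, inner_smul_right]
    have : (starRingEnd ℂ) Complex.I = -Complex.I := Complex.conj_I
    rw [this]
    ring_nf
    linear_combination (-(⟪y₁, y₂⟫)/2) * Complex.I_sq
  set g : ℕ → H := fun n => c • (e n + u n) with hgdef
  set h : ℕ → H := fun n => c • (e n + Complex.I • u n) with hhdef
  have hgON : Orthonormal ℂ g := by
    rw [orthonormal_iff_ite]
    intro i j
    rw [hgdef]
    simp only []
    rw [expand1, orthonormal_iff_ite.mp he i j, orthonormal_iff_ite.mp hu i j, heu, hue]
    rcases eq_or_ne i j with rfl | hij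
    · norm_num
    · simp [hij]
  have hhON : Orthonormal ℂ h := by
    rw [orthonormal_iff_ite]
    intro i j
    rw [hhdef]
    simp only []
    rw [expand2, orthonormal_iff_ite.mp he i j, orthonormal_iff_ite.mp hu i j, heu, hue]
    rcases eq_or_ne i j with rfl | hij
    · norm_num
    · simp [hij]
  have hgdiag : ∀ n, ⟪g n, a (g n)⟫
      = (1/2) * (⟪e n, a (e n)⟫ + ⟪e n, a (u n)⟫ + ⟪u n, a (e n)⟫ + ⟪u n, a (u n)⟫) := by
    intro n
    have : a (g n) = c • (a (e n) + a (u n)) := by rw [hgdef]; simp [map_add]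
    rw [hgdef]
    simp only []
    rw [show a (c • (e n + u n)) = c • (a (e n) + a (u n)) by simp [map_add], expand1]
  have hhdiag : ∀ n, ⟪h n, a (h n)⟫
      = (1/2) * (⟪e n, a (e n)⟫ + Complex.I * ⟪e n, a (u n)⟫ - Complex.I * ⟪u n, a (e n)⟫
          + ⟪u n, a (u n)⟫) := by
    intro n
    rw [hhdef]
    simp only []
    rw [show a (c • (e n + Complex.I • u n)) = c • (a (e n) + Complex.I • a (u n)) by
      simp [map_add], expand2]
  -- limits
  have hge := hz g hgON
  have hhe := hz h hhON
  have hee := hz e he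
  have huu := hz u hu
  set A : ℕ → ℂ := fun n => ⟪e n, a (u n)⟫ with hA
  set B : ℕ → ℂ := fun n => ⟪u n, a (e n)⟫ with hB
  have hs : Tendsto (fun n => A n + B n) atTop (nhds 0) := by
    have heq : (fun n => A n + B n)
        = fun n => 2 * ⟪g n, a (g n)⟫ - ⟪e n, a (e n)⟫ - ⟪u n, a (u n)⟫ := by
      funext n
      rw [hgdiag n]
      ring
    rw [heq]
    have : (2 : ℂ) * z - z - z = 0 := by ring
    rw [← this]
    exact ((hge.const_mul 2).sub hee).sub huu
  have ht : Tendsto (fun n => Complex.I * A n - Complex.I * B n) atTop (nhds 0) := by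
    have heq : (fun n => Complex.I * A n - Complex.I * B n)
        = fun n => 2 * ⟪h n, a (h n)⟫ - ⟪e n, a (e n)⟫ - ⟪u n, a (u n)⟫ := by
      funext n
      rw [hhdiag n]
      ring
    rw [heq]
    have : (2 : ℂ) * z - z - z = 0 := by ring
    rw [← this]
    exact ((hhe.const_mul 2).sub hee).sub huu
  have hfinal : (fun n => B n)
      = fun n => ((A n + B n) + Complex.I * (Complex.I * A n - Complex.I * B n)) / 2 := by
    funext n
    linear_combination ((B n - A n)/2) * Complex.I_mul_I
  have hlim : Tendsto (fun n => ((A n + B n) + Complex.I * (Complex.I * A n - Complex.I * B n)) / 2)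
      atTop (nhds 0) := by
    have h0 : ((0 : ℂ) + Complex.I * 0) / 2 = 0 := by ring
    rw [← h0]
    exact (hs.add (ht.const_mul Complex.I)).div_const 2
  rw [← hfinal] at hlim
  exact hlim

theorem calkin_center_forward
    (hinf : ¬ FiniteDimensional ℂ H) (a : H →L[ℂ] H)
    (hyp : ∀ b : H →L[ℂ] H, IsCompactOperator ⇑(a ∘L b - b ∘L a)) :
    ∃ z : ℂ, IsCompactOperator ⇑(a - z • (1 : H →L[ℂ] H)) := by
  obtain ⟨z, hz⟩ := diag_conv hinf a hyp
  refine ⟨z, ?_⟩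
  by_contra hnc
  set a' : H →L[ℂ] H := a - z • (1 : H →L[ℂ] H) with ha'
  have ha'app : ∀ x : H, a' x = a x - z • x := by
    intro x
    rw [ha']
    simp
  obtain ⟨δ, hδ, oracle⟩ := exists_unit_of_not_compact hnc
  -- oracle on lists
  have oracle' : ∀ l : List H, ∃ x : H, ‖x‖ = 1 ∧
      x ∈ (Submodule.span ℂ {y | y ∈ l ++ l.map (ContinuousLinearMap.adjoint a')})ᗮ ∧
      δ ≤ ‖a' x‖ := by
    intro l
    exact oracle _ (FiniteDimensional.span_of_finite ℂ (List.finite_toSet _))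
  choose p hp1 hp2 hp3 using oracle'
  let wf : List H → H := fun l => a' (p l) - ⟪p l, a' (p l)⟫ • p l
  let chain : ℕ → List H := fun n => Nat.rec [] (fun _ l => wf l :: p l :: l) n
  have hchain : ∀ n, chain (n + 1) = wf (chain n) :: p (chain n) :: chain n := fun n => rfl
  set x : ℕ → H := fun n => p (chain n) with hx
  set d : ℕ → ℂ := fun n => ⟪x n, a' (x n)⟫ with hd
  set w : ℕ → H := fun n => a' (x n) - d n • x n with hw
  have hwfw : ∀ n, wf (chain n) = w n := fun n => rfl
  have hmono : ∀ m n, m ≤ n → ∀ y, y ∈ chain m → y ∈ chain n := by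
    intro m n hmn
    induction n with
    | zero => simp_all
    | succ n ih =>
      rcases Nat.lt_or_ge m (n+1) with h | h
      · intro y hy
        rw [hchain]
        exact List.mem_cons_of_mem _ (List.mem_cons_of_mem _ (ih (Nat.lt_succ_iff.mp h) y hy))
      · have : m = n + 1 := le_antisymm hmn h
        subst this
        exact fun y hy => hy
  have horth : ∀ n, ∀ y, y ∈ chain n → ⟪y, x n⟫ = 0 := by
    intro n y hy
    have h2 := hp2 (chain n)
    rw [Submodule.mem_orthogonal] at h2
    exact h2 y (Submodule.subset_span (by
      simp only [Set.mem_setOf_eq, List.mem_append]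
      exact Or.inl hy))
  have horthadj : ∀ n, ∀ y, y ∈ chain n → ⟪ContinuousLinearMap.adjoint a' y, x n⟫ = 0 := by
    intro n y hy
    have h2 := hp2 (chain n)
    rw [Submodule.mem_orthogonal] at h2
    exact h2 _ (Submodule.subset_span (by
      simp only [Set.mem_setOf_eq, List.mem_append, List.mem_map]
      exact Or.inr ⟨y, hy, rfl⟩))
  have hmemx : ∀ n, x n ∈ chain (n+1) := by
    intro n
    rw [hchain]
    exact List.mem_cons_of_mem _ (List.mem_cons_self)
  have hmemw : ∀ n, w n ∈ chain (n+1) := by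
    intro n
    rw [hchain, hwfw]
    exact List.mem_cons_self
  have hnorm1 : ∀ n, ‖x n‖ = 1 := fun n => hp1 (chain n)
  have hδx : ∀ n, δ ≤ ‖a' (x n)‖ := fun n => hp3 (chain n)
  have hxself : ∀ n, (⟪x n, x n⟫ : ℂ) = 1 := by
    intro n
    rw [inner_self_eq_norm_sq_to_K, hnorm1 n]
    norm_num
  have hxx : ∀ m n, m < n → ⟪x m, x n⟫ = 0 := by
    intro m n hmn
    exact horth n _ (hmono (m+1) n hmn _ (hmemx m))
  have hxa : ∀ m n, m < n → ⟪x m, a' (x n)⟫ = 0 := by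
    intro m n hmn
    rw [← ContinuousLinearMap.adjoint_inner_left]
    exact horthadj n _ (hmono (m+1) n hmn _ (hmemx m))
  have hwx : ∀ m n, ⟪x m, w n⟫ = 0 := by
    intro m n
    rcases lt_trichotomy m n with h | h | h
    · rw [hw]
      simp only [inner_sub_right, inner_smul_right]
      rw [hxa m n h, hxx m n h]
      ring
    · subst h
      rw [hw]
      simp only [inner_sub_right, inner_smul_right]
      rw [hxself m]
      rw [hd]
      ring
    · rw [← inner_conj_symm]
      rw [horth m _ (hmono (n+1) m h _ (hmemw n)), map_zero]
  have hwa : ∀ m n, m < n → ⟪w m, a' (x n)⟫ = 0 := by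
    intro m n hmn
    rw [← ContinuousLinearMap.adjoint_inner_left]
    exact horthadj n _ (hmono (m+1) n hmn _ (hmemw m))
  have hww : ∀ m n, m ≠ n → ⟪w m, w n⟫ = 0 := by
    have key : ∀ m n, m < n → ⟪w m, w n⟫ = 0 := by
      intro m n hmn
      rw [hw]
      simp only [inner_sub_right, inner_smul_right]
      rw [hwa m n hmn]
      have : ⟪w m, x n⟫ = 0 := horth n _ (hmono (m+1) n hmn _ (hmemw m))
      rw [this]
      ring
    intro m n hmn
    rcases lt_or_gt_of_ne hmn with h | h
    · exact key m n h
    · rw [← inner_conj_symm, key n m h, map_zero]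
  -- x is orthonormal
  have hxON : Orthonormal ℂ x := by
    rw [orthonormal_iff_ite]
    intro i j
    rcases lt_trichotomy i j with h | h | h
    · rw [hxx i j h, if_neg h.ne]
    · subst h
      rw [hxself, if_pos rfl]
    · rw [← inner_conj_symm, hxx j i h, map_zero, if_neg h.ne']
  -- the diagonal of a' along x tends to 0
  have hdtend : Tendsto d atTop (nhds 0) := by
    have h1 := hz x hxON
    have heq : d = fun n => ⟪x n, a (x n)⟫ - z := by
      funext n
      rw [hd]
      simp only []
      rw [ha'app, inner_sub_right, inner_smul_right, hxself n]
      ring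
    rw [heq]
    have : (z : ℂ) - z = 0 := sub_self z
    rw [← this]
    exact h1.sub tendsto_const_nhds
  -- eventually ‖w n‖ ≥ δ/2
  have hweak : ∀ᶠ n in atTop, ‖d n‖ < δ/2 := by
    have := hdtend.norm
    rw [show ‖(0:ℂ)‖ = 0 from norm_zero] at this
    exact this.eventually_lt_const (by positivity)
  obtain ⟨K, hK⟩ := hweak.exists_forall_of_atTop
  have hwnorm : ∀ n, K ≤ n → δ/2 ≤ ‖w n‖ := by
    intro n hn
    have hdn := hK n hn
    have hdecomp : a' (x n) = w n + d n • x n := by rw [hw]; simp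
    have hperp : (⟪w n, d n • x n⟫ : ℂ) = 0 := by
      rw [inner_smul_right, ← inner_conj_symm, hwx n n, map_zero, mul_zero]
    have hpyth : ‖a' (x n)‖ * ‖a' (x n)‖ = ‖w n‖ * ‖w n‖ + ‖d n • x n‖ * ‖d n • x n‖ := by
      rw [hdecomp]
      exact norm_add_sq_eq_norm_sq_add_norm_sq_of_inner_eq_zero _ _ hperp
    have hds : ‖d n • x n‖ = ‖d n‖ := by rw [norm_smul, hnorm1 n, mul_one]
    have h1 : δ ≤ ‖a' (x n)‖ := hδx n
    nlinarith [norm_nonneg (w n), norm_nonneg (a' (x n)), norm_nonneg (d n)]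
  -- build the two mutually orthogonal orthonormal sequences
  set E : ℕ → H := fun k => x (K + k) with hE
  set U : ℕ → H := fun k => (((‖w (K + k)‖ : ℝ) : ℂ))⁻¹ • w (K + k) with hU
  have hwpos : ∀ k : ℕ, (0:ℝ) < ‖w (K + k)‖ := fun k =>
    lt_of_lt_of_le (by positivity) (hwnorm (K + k) (Nat.le_add_right K k))
  have hEON : Orthonormal ℂ E := hxON.comp _ (fun i j h => by omega)
  have hUON : Orthonormal ℂ U := by
    rw [orthonormal_iff_ite]
    intro i j
    rw [hU]
    simp only []
    rw [inner_smul_left, inner_smul_right]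
    rcases eq_or_ne i j with rfl | hij
    · rw [inner_self_eq_norm_sq_to_K, if_pos rfl]
      have hne : ((‖w (K + i)‖ : ℝ) : ℂ) ≠ 0 := by
        simp only [ne_eq, Complex.ofReal_eq_zero]
        exact (hwpos i).ne'
      rw [map_inv₀, Complex.conj_ofReal]
      field_simp
      rfl
    · rw [hww _ _ (by omega), if_neg hij]
      ring
  have hEU : ∀ i j, ⟪E i, U j⟫ = 0 := by
    intro i j
    rw [hE, hU]
    simp only []
    rw [inner_smul_right, hwx, mul_zero]
  -- apply the off-diagonal lemma
  have hoff := offdiag a hz hEON hUON hEU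
  -- but the inner products are bounded below
  have hval : ∀ k, ⟪U k, a (E k)⟫ = ((‖w (K + k)‖ : ℝ) : ℂ) := by
    intro k
    have h1 : a (E k) = a' (E k) + z • E k := by
      rw [ha'app]
      abel
    rw [h1, inner_add_right, inner_smul_right]
    have h2 : ⟪U k, E k⟫ = 0 := by
      rw [← inner_conj_symm, hEU, map_zero]
    rw [h2, mul_zero, add_zero]
    rw [hU, hE]
    simp only []
    rw [inner_smul_left, map_inv₀, Complex.conj_ofReal]
    have h3 : a' (x (K + k)) = w (K + k) + d (K + k) • x (K + k) := by rw [hw]; simp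
    rw [h3, inner_add_right, inner_smul_right]
    have h4 : ⟪w (K + k), x (K + k)⟫ = 0 := by
      rw [← inner_conj_symm, hwx, map_zero]
    rw [h4, mul_zero, add_zero, inner_self_eq_norm_sq_to_K]
    have hne : ((‖w (K + k)‖ : ℝ) : ℂ) ≠ 0 := by
      simp only [ne_eq, Complex.ofReal_eq_zero]
      exact (hwpos k).ne'
    field_simp
    rfl
  have hnormval : ∀ k, δ/2 ≤ ‖⟪U k, a (E k)⟫‖ := by
    intro k
    rw [hval k]
    rw [Complex.norm_real, Real.norm_eq_abs, abs_of_pos (hwpos k)]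
    exact hwnorm _ (Nat.le_add_right K k)
  have := hoff.norm
  rw [show ‖(0:ℂ)‖ = 0 from norm_zero] at this
  have hev := this.eventually_lt_const (show (0:ℝ) < δ/2 by positivity)
  obtain ⟨k, hk⟩ := hev.exists
  exact absurd (hnormval k) (not_le.mpr hk)

theorem calkin_center_backward (a : H →L[ℂ] H) {z : ℂ}
    (hz : IsCompactOperator ⇑(a - z • (1 : H →L[ℂ] H))) (b : H →L[ℂ] H) :
    IsCompactOperator ⇑(a ∘L b - b ∘L a) := by
  set a' : H →L[ℂ] H := a - z • (1 : H →L[ℂ] H) with ha'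
  have h1 : IsCompactOperator (⇑a' ∘ ⇑b) := hz.comp_clm b
  have h2 : IsCompactOperator (⇑b ∘ ⇑a') := hz.continuous_comp b.continuous
  have h3 : IsCompactOperator ((⇑a' ∘ ⇑b) - (⇑b ∘ ⇑a')) := h1.sub h2
  have heq : ⇑(a ∘L b - b ∘L a) = (⇑a' ∘ ⇑b) - (⇑b ∘ ⇑a') := by
    funext v
    simp only [ContinuousLinearMap.sub_apply, ContinuousLinearMap.comp_apply,
      Pi.sub_apply, Function.comp_apply, ha', ContinuousLinearMap.smul_apply,
      ContinuousLinearMap.one_apply, map_sub, map_smul]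
    abel
  rw [heq]
  exact h3

end CalkinAux

/-- the center of the Calkin algebra of an infinite-dimensional Hilbert space
consists exactly of the scalars: an operator commutes with every operator modulo the compacts
if and only if it is a scalar multiple of the identity modulo the compacts. -/
theorem calkin_center_eq_scalars
    {H : Type*} [NormedAddCommGroup H] [InnerProductSpace ℂ H] [CompleteSpace H]
    (hinf : ¬ FiniteDimensional ℂ H) (a : H →L[ℂ] H) :
    (∀ b : H →L[ℂ] H, IsCompactOperator ⇑(a ∘L b - b ∘L a)) ↔
      ∃ z : ℂ, IsCompactOperator ⇑(a - z • (1 : H →L[ℂ] H)) := by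
  constructor
  · exact fun hyp => CalkinAux.calkin_center_forward hinf a hyp
  · rintro ⟨z, hz⟩ b
    exact CalkinAux.calkin_center_backward a hz b
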